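/- Let G be a directed graph on vertices {1,…,N} with independence number α. For each vertex i let d_i⁻ denote its in-degree. Then Σ_{i=1}^N 1/(1 + d_i⁻) ≤ 2α·log(1 + N/α). -/

import Mathlib

open Classical in
/-- In-degree of vertex `i` in the directed graph `adj`. -/
noncomputable def indegree (N : ℕ) (adj : Fin N → Fin N → Prop) (i : Fin N) : ℕ :=
  (Finset.univ.filter (fun j => adj j i)).card

open Classical in
/-- Independence number of a directed graph: the largest set of vertices with no
arc (in either direction) between any two distinct vertices of the set. -/
noncomputable def indepNumD (N : ℕ) (adj : Fin N → Fin N → Prop) : ℕ :=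
  (Finset.univ.powerset.filter
    (fun S : Finset (Fin N) =>
      ∀ i ∈ S, ∀ j ∈ S, i ≠ j → ¬ adj i j ∧ ¬ adj j i)).sup Finset.card

namespace Stmt12Aux

open Finset Classical

variable {N : ℕ} (adj : Fin N → Fin N → Prop)

/-- Symmetric (underlying) edge relation of the digraph. -/
def edgeR (i j : Fin N) : Prop := i ≠ j ∧ (adj i j ∨ adj j i)

/-- Undirected degree of `i` inside `S`. -/
noncomputable def degS (S : Finset (Fin N)) (i : Fin N) : ℕ :=
  (S.filter fun u => edgeR adj u i).card

/-- Twice the number of undirected edges inside `S`. -/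
noncomputable def eS (S : Finset (Fin N)) : ℕ := ∑ i ∈ S, degS adj S i

/-- Turán-type lower bound for the number of edges in a graph whose
independent subsets all have size at most `a`. -/
lemma lemE (S : Finset (Fin N)) : ∀ a : ℕ,
    (∀ T ⊆ S, (∀ i ∈ T, ∀ j ∈ T, i ≠ j → ¬ adj i j ∧ ¬ adj j i) → T.card ≤ a) →
    (S.card : ℤ) * ((S.card : ℤ) - a) ≤ (a : ℤ) * eS adj S := by
  induction S using Finset.strongInduction with
  | _ S IH =>
    intro a ha
    rcases S.eq_empty_or_nonempty with rfl | hS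
    · simp [eS]
    obtain ⟨w, hw⟩ := hS
    have ha1 : 1 ≤ a := by
      have := ha {w} (by simpa using hw) (by simp)
      simpa using this
    obtain ⟨v, hv, hmin⟩ := S.exists_min_image (degS adj S) ⟨w, hw⟩
    set δ := degS adj S v with hδdef
    set Nv : Finset (Fin N) := insert v (S.filter fun u => edgeR adj u v) with hNv
    have hNvS : Nv ⊆ S := by
      rw [hNv]; exact insert_subset hv (filter_subset _ _)
    have hvNv : v ∈ Nv := mem_insert_self _ _
    have hNvcard : Nv.card = δ + 1 := by
      rw [hNv, card_insert_of_notMem, hδdef, degS]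
      intro hmem
      exact ((mem_filter.mp hmem).2).1 rfl
    set S' := S \ Nv with hS'
    have hS'sub : S' ⊂ S := Finset.sdiff_ssubset hNvS ⟨v, hvNv⟩
    have hcards : S'.card + Nv.card = S.card := card_sdiff_add_card_eq_card hNvS
    have ha' : ∀ T ⊆ S', (∀ i ∈ T, ∀ j ∈ T, i ≠ j → ¬ adj i j ∧ ¬ adj j i) →
        T.card ≤ a - 1 := by
      intro T hT hTind
      have hvT : v ∉ T := fun h => (mem_sdiff.mp (hT h)).2 hvNv
      have hnoedge : ∀ u ∈ T, ¬ adj u v ∧ ¬ adj v u := by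
        intro u hu
        have hu' := hT hu
        rw [hS', mem_sdiff] at hu'
        have huv : u ≠ v := fun h => hu'.2 (h ▸ hvNv)
        constructor <;> intro hadj <;>
          exact hu'.2 (by
            rw [hNv]
            exact mem_insert_of_mem (mem_filter.mpr ⟨hu'.1, huv, by tauto⟩))
      have hins : (insert v T).card ≤ a := by
        apply ha
        · exact insert_subset hv (hT.trans (sdiff_subset))
        · intro i hi j hj hij
          rcases mem_insert.mp hi with rfl | hi'
          · rcases mem_insert.mp hj with rfl | hj'
            · exact absurd rfl hij
            · have := hnoedge j hj'; tauto
          · rcases mem_insert.mp hj with rfl | hj'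
            · have := hnoedge i hi'; tauto
            · exact hTind i hi' j hj' hij
      rw [card_insert_of_notMem hvT] at hins
      omega
    have hIH := IH S' hS'sub (a - 1) ha'
    have hsplit : ∑ i ∈ S', degS adj S i + ∑ i ∈ Nv, degS adj S i = eS adj S := by
      rw [eS]
      exact sum_sdiff hNvS
    have hNvsum : Nv.card * δ ≤ ∑ i ∈ Nv, degS adj S i :=
      card_nsmul_le_sum _ _ _ (fun i hi => hmin i (hNvS hi))
    have hS'sum : eS adj S' ≤ ∑ i ∈ S', degS adj S i := by
      apply sum_le_sum
      intro i hi
      exact card_le_card (filter_subset_filter _ sdiff_subset)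
    have he : (δ + 1) * δ + eS adj S' ≤ eS adj S := by
      rw [← hsplit, ← hNvcard]
      omega
    have key : ∀ (m n' b e e' : ℤ), 1 ≤ b →
        m*(m-1) + e' ≤ e → n'*(n' - b) ≤ b*e' → 0 ≤ n' → 0 ≤ e' →
        (m+n')*((m+n') - (b+1)) ≤ (b+1)*e := by
      intro m n' b e e' hb he hIH hn' he'
      have h1 : (b+1)*b*(m*(m-1) + e') ≤ (b+1)*b*e :=
        mul_le_mul_of_nonneg_left he (by positivity)
      have h2 : (b+1)*(n'*(n' - b)) ≤ (b+1)*(b*e') :=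
        mul_le_mul_of_nonneg_left hIH (by positivity)
      have hsq : 0 ≤ ((b+1)*m - (m+n'))^2 := sq_nonneg _
      have hkey : b * ((m+n')*((m+n') - (b+1))) ≤ b * ((b+1)*e) := by
        nlinarith [h1, h2, hsq]
      exact le_of_mul_le_mul_left hkey (by linarith)
    rcases Nat.lt_or_ge a 2 with ha2 | ha2
    · have ha1' : a = 1 := by omega
      subst ha1'
      simp only [Nat.sub_self, Nat.cast_zero, zero_mul] at hIH
      have hS'0 : S'.card = 0 := by nlinarith [hIH, Int.natCast_nonneg S'.card]
      have hn : S.card = δ + 1 := by omega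
      have : eS adj S' = 0 := by
        rw [eS, card_eq_zero.mp hS'0]; simp
      rw [this] at he
      push_cast [hn]
      nlinarith [he, Nat.cast_le (α := ℤ).mpr he]
    · have hb : (1 : ℤ) ≤ (a : ℤ) - 1 := by
        have : (2:ℤ) ≤ a := by exact_mod_cast ha2
        linarith
      have hcast : ((a : ℤ) - 1) = ((a - 1 : ℕ) : ℤ) := by
        have : (1:ℕ) ≤ a := ha1
        push_cast [this]; ring
      have hIH' : (S'.card : ℤ) * ((S'.card : ℤ) - ((a:ℤ)-1)) ≤ ((a:ℤ)-1) * eS adj S' := by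
        rw [hcast]; exact hIH
      have he' : ((δ:ℤ) + 1) * δ + eS adj S' ≤ eS adj S := by exact_mod_cast he
      have hn : (S.card : ℤ) = ((δ:ℤ)+1) + S'.card := by
        rw [← hcards, hNvcard]; push_cast; ring
      have := key ((δ:ℤ)+1) (S'.card) ((a:ℤ)-1) (eS adj S) (eS adj S') hb
        (by linarith [he']) hIH' (by positivity) (by positivity)
      rw [hn]
      have haa : ((a:ℤ)-1) + 1 = a := by ring
      rw [← haa]
      convert this using 2 <;> ring

/-- The edge count is at most twice the sum of (full) in-degrees. -/
lemma lemD (S : Finset (Fin N)) : eS adj S ≤ 2 * ∑ i ∈ S, indegree N adj i := by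
  have hdeg : ∀ i, degS adj S i ≤ (S.filter fun u => u ≠ i ∧ adj u i).card
      + (S.filter fun u => u ≠ i ∧ adj i u).card := by
    intro i
    rw [degS]
    refine le_trans (card_le_card ?_) (card_union_le _ _)
    intro u hu
    rw [mem_filter] at hu
    rw [mem_union, mem_filter, mem_filter]
    obtain ⟨hS, hne, h | h⟩ := hu
    · exact Or.inl ⟨hS, hne, h⟩
    · exact Or.inr ⟨hS, hne, h⟩
  have hswap : ∑ i ∈ S, (S.filter fun u => u ≠ i ∧ adj i u).card
      = ∑ i ∈ S, (S.filter fun u => u ≠ i ∧ adj u i).card := by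
    simp only [card_filter]
    rw [Finset.sum_comm]
    refine sum_congr rfl fun u _ => sum_congr rfl fun i _ => ?_
    congr 1
    rw [ne_comm]
  have hin : ∀ i, (S.filter fun u => u ≠ i ∧ adj u i).card ≤ indegree N adj i := by
    intro i
    show _ ≤ (Finset.univ.filter (fun j => adj j i)).card
    apply card_le_card
    intro u hu
    rw [mem_filter] at hu ⊢
    exact ⟨mem_univ _, hu.2.2⟩
  calc eS adj S ≤ ∑ i ∈ S, ((S.filter fun u => u ≠ i ∧ adj u i).card
        + (S.filter fun u => u ≠ i ∧ adj i u).card) := sum_le_sum fun i _ => hdeg i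
    _ = ∑ i ∈ S, (S.filter fun u => u ≠ i ∧ adj u i).card
        + ∑ i ∈ S, (S.filter fun u => u ≠ i ∧ adj i u).card := sum_add_distrib
    _ = 2 * ∑ i ∈ S, (S.filter fun u => u ≠ i ∧ adj u i).card := by rw [hswap]; ring
    _ ≤ 2 * ∑ i ∈ S, indegree N adj i :=
        Nat.mul_le_mul_left 2 (sum_le_sum fun i _ => hin i)

/-- Telescoping logarithm estimate. -/
lemma logsum (α : ℝ) (hα : 1 ≤ α) (N : ℕ) :
    ∑ j ∈ Finset.range N, 1 / ((j : ℝ) + 1 + α) ≤ Real.log (1 + (N : ℝ) / α) := by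
  have hα0 : 0 < α := by linarith
  have step : ∀ j ∈ Finset.range N, 1 / ((j : ℝ) + 1 + α) ≤
      Real.log (((j+1 : ℕ) : ℝ) + α) - Real.log ((j : ℝ) + α) := by
    intro j _
    have h1 : (0:ℝ) < (j:ℝ) + α := by positivity
    have h2 : (0:ℝ) < (j:ℝ) + 1 + α := by positivity
    have h := Real.log_le_sub_one_of_pos (show (0:ℝ) < ((j:ℝ)+α)/((j:ℝ)+1+α) by positivity)
    rw [Real.log_div (by linarith) (by linarith)] at h
    have heq : ((j:ℝ)+α)/((j:ℝ)+1+α) - 1 = -(1/((j:ℝ)+1+α)) := by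
      field_simp
      ring
    rw [heq] at h
    push_cast
    linarith
  calc ∑ j ∈ Finset.range N, 1 / ((j : ℝ) + 1 + α)
      ≤ ∑ j ∈ Finset.range N,
        (Real.log (((j+1 : ℕ) : ℝ) + α) - Real.log ((j : ℝ) + α)) := sum_le_sum step
    _ = Real.log ((N : ℝ) + α) - Real.log ((0 : ℕ) + α) :=
        Finset.sum_range_sub (fun j => Real.log ((j : ℝ) + α)) N
    _ = Real.log (1 + (N : ℝ) / α) := by
        rw [← Real.log_div (by positivity) (by positivity)]
        · congr 1
          push_cast
          field_simp
          ring

end Stmt12Aux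

open Finset Classical Stmt12Aux in
theorem stmt_12 (N : ℕ) (hN : 1 ≤ N) (adj : Fin N → Fin N → Prop) :
    ∑ i, (1 : ℝ) / (1 + indegree N adj i) ≤
      2 * (indepNumD N adj : ℝ) *
        Real.log (1 + (N : ℝ) / (indepNumD N adj : ℝ)) := by
  set α := indepNumD N adj with hαdef
  -- any independent set has size at most α
  have hindep : ∀ T : Finset (Fin N),
      (∀ i ∈ T, ∀ j ∈ T, i ≠ j → ¬ adj i j ∧ ¬ adj j i) → T.card ≤ α := by
    intro T hT
    exact Finset.le_sup (f := Finset.card)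
      (mem_filter.mpr ⟨mem_powerset.mpr (subset_univ _), hT⟩)
  -- α ≥ 1
  have hα1 : 1 ≤ α := by
    have := Finset.le_sup (f := Finset.card) (s := Finset.univ.powerset.filter
      (fun S : Finset (Fin N) => ∀ i ∈ S, ∀ j ∈ S, i ≠ j → ¬ adj i j ∧ ¬ adj j i))
      (b := {(⟨0, hN⟩ : Fin N)})
      (mem_filter.mpr ⟨mem_powerset.mpr (subset_univ _), by simp⟩)
    rwa [card_singleton] at this
  have hα0R : (0:ℝ) < α := by exact_mod_cast hα1
  set d := indegree N adj with hddef
  set σ := Tuple.sort d with hσdef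
  -- per-vertex bound after sorting
  have hvert : ∀ j : Fin N, ((j:ℤ) + 1) + α ≤ 2 * α * (1 + d (σ j)) := by
    intro j
    set S : Finset (Fin N) := (Finset.Iic j).image σ with hSdef
    have hScard : S.card = (j : ℕ) + 1 := by
      rw [hSdef, card_image_of_injective _ σ.injective, Fin.card_Iic]
    have hE := lemE adj S α (fun T _ hT => hindep T hT)
    have hD := lemD adj S
    have hsum : ∑ i ∈ S, d i ≤ ((j:ℕ) + 1) * d (σ j) := by
      rw [hSdef, sum_image (fun a _ b _ h => σ.injective h)]
      calc ∑ i ∈ Finset.Iic j, d (σ i) ≤ ∑ i ∈ Finset.Iic j, d (σ j) :=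
            sum_le_sum fun i hi => Tuple.monotone_sort d (mem_Iic.mp hi)
        _ = ((j:ℕ) + 1) * d (σ j) := by rw [sum_const, Fin.card_Iic, smul_eq_mul]
    have hchain : ((j:ℤ) + 1) * (((j:ℤ) + 1) - α) ≤
        ((j:ℤ) + 1) * (2 * α * d (σ j)) := by
      have h1 : (eS adj S : ℤ) ≤ 2 * ∑ i ∈ S, (d i : ℤ) := by
        have := hD
        push_cast
        exact_mod_cast this
      have h2 : (∑ i ∈ S, (d i : ℤ)) ≤ ((j:ℤ) + 1) * d (σ j) := by
        have := hsum
        push_cast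
        exact_mod_cast this
      have h3 : (α:ℤ) * (eS adj S) ≤ (α:ℤ) * (2 * (((j:ℤ) + 1) * d (σ j))) := by
        apply mul_le_mul_of_nonneg_left _ (by positivity)
        calc (eS adj S : ℤ) ≤ 2 * ∑ i ∈ S, (d i : ℤ) := h1
          _ ≤ 2 * (((j:ℤ) + 1) * d (σ j)) := by linarith
      have h4 : ((j:ℤ)+1) * (((j:ℤ)+1) - α) ≤ (α:ℤ) * eS adj S := by
        have := hE
        rw [hScard] at this
        push_cast at this ⊢
        linarith
      calc ((j:ℤ) + 1) * (((j:ℤ) + 1) - α) ≤ (α:ℤ) * eS adj S := h4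
        _ ≤ (α:ℤ) * (2 * (((j:ℤ) + 1) * d (σ j))) := h3
        _ = ((j:ℤ) + 1) * (2 * α * d (σ j)) := by ring
    have hdiv : ((j:ℤ) + 1) - α ≤ 2 * α * d (σ j) :=
      le_of_mul_le_mul_left hchain (by positivity)
    have : (0:ℤ) < α := by exact_mod_cast hα1
    linarith
  -- real per-vertex bound
  have hreal : ∀ j : Fin N, (1:ℝ) / (1 + d (σ j)) ≤ 2 * α / ((j:ℝ) + 1 + α) := by
    intro j
    have h1 : (0:ℝ) < 1 + (d (σ j) : ℝ) := by positivity
    have h2 : (0:ℝ) < (j:ℝ) + 1 + α := by positivity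
    rw [div_le_div_iff₀ h1 h2]
    have := hvert j
    have hcast : ((j:ℝ) + 1) + α ≤ 2 * α * (1 + d (σ j)) := by exact_mod_cast this
    linarith
  calc ∑ i, (1 : ℝ) / (1 + d i)
      = ∑ j, (1 : ℝ) / (1 + d (σ j)) := (Equiv.sum_comp σ (fun i => (1:ℝ)/(1 + d i))).symm
    _ ≤ ∑ j : Fin N, 2 * α / ((j:ℝ) + 1 + α) := sum_le_sum fun j _ => hreal j
    _ = 2 * α * ∑ j ∈ Finset.range N, 1 / ((j:ℝ) + 1 + α) := by
        rw [Fin.sum_univ_eq_sum_range (fun j => 2 * (α:ℝ) / ((j:ℝ) + 1 + α)), mul_sum]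
        exact sum_congr rfl fun j _ => by rw [mul_one_div]
    _ ≤ 2 * α * Real.log (1 + (N : ℝ) / α) := by
        apply mul_le_mul_of_nonneg_left (logsum α (by exact_mod_cast hα1) N) (by positivity)
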